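/- In the group algebra C[S_{d,n}], for |i−j| = 1, the elements ē_i := (1/d) Σ_{k=0}^{d-1} z_i^k z_{i+1}^{-k} satisfy ē_i ē_j s_i = ē_j s_i ē_j = s_i ē_i ē_j. -/

import Mathlib

open scoped BigOperators

/-- The action of the symmetric group on `(ℤ/dℤ)^n` permuting the coordinates. -/
def permAut (n d : ℕ) : Equiv.Perm (Fin n) →* MulAut (Fin n → Multiplicative (ZMod d)) where
  toFun σ :=
    { toFun := fun f => f ∘ σ.symm
      invFun := fun f => f ∘ σ
      left_inv := fun f => by funext i; simp
      right_inv := fun f => by funext i; simp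
      map_mul' := fun f g => rfl }
  map_one' := rfl
  map_mul' := fun σ τ => rfl

/-- The framed symmetric group `S_{d,n} = (ℤ/dℤ)^n ⋊ S_n` (here on `n+1` strands). -/
abbrev FramedSym (d n : ℕ) :=
  (Fin (n + 1) → Multiplicative (ZMod d)) ⋊[permAut (n + 1) d] Equiv.Perm (Fin (n + 1))

namespace BridgeTieAux

variable {d n : ℕ}

/-- The framing generator at `a` raised to the power `k : ZMod d`. -/
def w (d n : ℕ) (a : Fin (n+1)) (k : ZMod d) : FramedSym d n :=
  SemidirectProduct.inl (Pi.mulSingle a (Multiplicative.ofAdd k))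

lemma w_same (a : Fin (n+1)) (k l : ZMod d) : w d n a k * w d n a l = w d n a (k+l) := by
  rw [w, w, w, ← map_mul]
  congr 1
  rw [← Pi.mulSingle_mul]
  rfl

lemma w_comm (a b : Fin (n+1)) (k l : ZMod d) :
    w d n a k * w d n b l = w d n b l * w d n a k := by
  rw [w, w, ← map_mul, ← map_mul, mul_comm]

lemma zeta_pow (a b : Fin (n+1)) (k : ℕ) :
    w d n a 1 ^ k * (w d n b 1)⁻¹ ^ k = w d n a (k : ZMod d) * w d n b (-(k : ZMod d)) := by
  congr 1
  · rw [w, w, ← map_pow]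
    congr 1
    rw [← Pi.mulSingle_pow]
    congr 1
    rw [← ofAdd_nsmul]
    congr 1
    simp
  · rw [inv_pow, w, w, ← map_pow, ← map_inv]
    congr 1
    rw [← Pi.mulSingle_pow, ← Pi.mulSingle_inv]
    congr 1
    rw [← ofAdd_nsmul, ← ofAdd_neg]
    congr 1
    simp

lemma permAut_single (σ : Equiv.Perm (Fin (n+1))) (a : Fin (n+1))
    (v : Multiplicative (ZMod d)) :
    (permAut (n+1) d) σ (Pi.mulSingle a v) = Pi.mulSingle (σ a) v := by
  funext x
  simp only [permAut, MonoidHom.coe_mk, OneHom.coe_mk, MulEquiv.coe_mk, Equiv.coe_fn_mk,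
    Function.comp_apply]
  change (Pi.mulSingle a v : Fin (n+1) → Multiplicative (ZMod d)) (σ.symm x) =
    (Pi.mulSingle (σ a) v : Fin (n+1) → Multiplicative (ZMod d)) x
  rcases eq_or_ne x (σ a) with h | h
  · subst h; rw [Equiv.symm_apply_apply]; simp
  · rw [Pi.mulSingle_eq_of_ne h, Pi.mulSingle_eq_of_ne]
    intro hc
    exact h (by rw [← hc]; simp)

lemma inr_mul_w (σ : Equiv.Perm (Fin (n+1))) (a : Fin (n+1)) (k : ZMod d) :
    SemidirectProduct.inr (φ := permAut (n+1) d) σ * w d n a k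
      = w d n (σ a) k * SemidirectProduct.inr σ := by
  rw [w, w, ← permAut_single σ a, SemidirectProduct.inl_aut]
  simp [mul_assoc, ← map_mul]

section Algebra

variable [NeZero d]

/-- `ē` element indexed by a pair of strands, as a sum over `ZMod d`. -/
noncomputable def e2 (d n : ℕ) [NeZero d] (a b : Fin (n+1)) :
    MonoidAlgebra ℂ (FramedSym d n) :=
  (d : ℂ)⁻¹ • ∑ k : ZMod d, MonoidAlgebra.of ℂ (FramedSym d n) (w d n a k * w d n b (-k))

/-- The canonical symmetric triple average. -/
noncomputable def Ecan (d n : ℕ) [NeZero d] (a b c : Fin (n+1)) :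
    MonoidAlgebra ℂ (FramedSym d n) :=
  ((d : ℂ)⁻¹ * (d : ℂ)⁻¹) • ∑ p : ZMod d × ZMod d,
    MonoidAlgebra.of ℂ (FramedSym d n) (w d n a p.1 * w d n b p.2 * w d n c (-(p.1+p.2)))

lemma e2_mul (a b u v : Fin (n+1)) :
    e2 d n a b * e2 d n u v = ((d : ℂ)⁻¹ * (d : ℂ)⁻¹) • ∑ p : ZMod d × ZMod d,
      MonoidAlgebra.of ℂ (FramedSym d n)
        (w d n a p.1 * w d n b (-p.1) * (w d n u p.2 * w d n v (-p.2))) := by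
  rw [e2, e2, smul_mul_smul_comm, Finset.sum_mul_sum, Fintype.sum_prod_type]
  simp only [← map_mul]

lemma e2_symm (a b : Fin (n+1)) : e2 d n a b = e2 d n b a := by
  rw [e2, e2]
  congr 1
  refine Fintype.sum_equiv (Equiv.neg (ZMod d)) _ _ fun k => ?_
  simp only [Equiv.neg_apply, neg_neg]
  rw [w_comm]

omit [NeZero d] in
lemma w3_congr (a b c : Fin (n+1)) {x y z x' y' z' : ZMod d} (hx : x = x') (hy : y = y')
    (hz : z = z') : w d n a x * w d n b y * w d n c z = w d n a x' * w d n b y' * w d n c z' := by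
  subst hx; subst hy; subst hz; rfl

lemma canon1 (a b c : Fin (n+1)) : e2 d n a b * e2 d n b c = Ecan d n a b c := by
  rw [e2_mul, Ecan]
  congr 1
  refine Fintype.sum_equiv ⟨fun p => (p.1, p.2 - p.1), fun q => (q.1, q.2 + q.1),
    by rintro ⟨k, l⟩; simp, by rintro ⟨k, l⟩; simp⟩ _ _ fun ⟨k, l⟩ => ?_
  simp only [Equiv.coe_fn_mk]
  congr 1
  rw [mul_assoc, ← mul_assoc (w d n b (-k)), w_same, ← mul_assoc]
  exact w3_congr _ _ _ rfl (by ring) (by ring)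

lemma canon2 (a b c : Fin (n+1)) : e2 d n b c * e2 d n a c = Ecan d n a b c := by
  rw [e2_mul, Ecan]
  congr 1
  refine Fintype.sum_equiv (Equiv.prodComm _ _) _ _ fun ⟨k, l⟩ => ?_
  simp only [Equiv.prodComm_apply, Prod.swap]
  congr 1
  rw [mul_assoc (w d n b k), ← mul_assoc (w d n c (-k)), w_comm c a,
    mul_assoc (w d n a l), w_same, ← mul_assoc, w_comm b a]
  exact w3_congr _ _ _ rfl rfl (by ring)

lemma canon3 (a b c : Fin (n+1)) : e2 d n a b * e2 d n a c = Ecan d n a b c := by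
  rw [e2_mul, Ecan]
  congr 1
  refine Fintype.sum_equiv ⟨fun p => (p.1 + p.2, -p.1), fun q => (-q.2, q.1 + q.2),
    by rintro ⟨k, l⟩; simp, by rintro ⟨k, l⟩; ext <;> simp <;> ring⟩ _ _ fun ⟨k, l⟩ => ?_
  simp only [Equiv.coe_fn_mk]
  congr 1
  rw [mul_assoc (w d n a k), ← mul_assoc (w d n b (-k)), w_comm b a,
    mul_assoc (w d n a l), ← mul_assoc (w d n a k), w_same, ← mul_assoc]
  exact w3_congr _ _ _ rfl rfl (by ring)

lemma canon4 (a b c : Fin (n+1)) : e2 d n b c * e2 d n a b = Ecan d n a b c := by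
  rw [e2_mul, Ecan]
  congr 1
  refine Fintype.sum_equiv ⟨fun p => (p.2, p.1 - p.2), fun q => (q.1 + q.2, q.1),
    by rintro ⟨k, l⟩; simp, by rintro ⟨k, l⟩; ext <;> simp⟩ _ _ fun ⟨k, l⟩ => ?_
  simp only [Equiv.coe_fn_mk]
  congr 1
  rw [mul_assoc (w d n b k), ← mul_assoc (w d n c (-k)), w_comm c a,
    mul_assoc (w d n a l), w_comm c b, ← mul_assoc (w d n b k), w_comm b a,
    mul_assoc (w d n a l), ← mul_assoc (w d n b k), w_same, ← mul_assoc]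
  exact w3_congr _ _ _ rfl (by ring) (by ring)

lemma s_mul_e2 (σ : Equiv.Perm (Fin (n+1))) (a b : Fin (n+1)) :
    MonoidAlgebra.of ℂ (FramedSym d n) (SemidirectProduct.inr σ) * e2 d n a b =
      e2 d n (σ a) (σ b) * MonoidAlgebra.of ℂ (FramedSym d n) (SemidirectProduct.inr σ) := by
  rw [e2, e2, mul_smul_comm, smul_mul_assoc, Finset.mul_sum, Finset.sum_mul]
  congr 1
  refine Finset.sum_congr rfl fun k _ => ?_
  rw [← map_mul, ← map_mul, ← mul_assoc, inr_mul_w, mul_assoc, inr_mul_w, ← mul_assoc]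

lemma sum_range_eq (a b : Fin (n+1)) :
    ∑ k ∈ Finset.range d,
        MonoidAlgebra.of ℂ (FramedSym d n) (w d n a 1 ^ k * (w d n b 1)⁻¹ ^ k)
      = ∑ k : ZMod d, MonoidAlgebra.of ℂ (FramedSym d n) (w d n a k * w d n b (-k)) := by
  refine Finset.sum_nbij' (fun k => (k : ZMod d)) (fun x => x.val) ?_ ?_ ?_ ?_ ?_
  · intros; exact Finset.mem_univ _
  · intro x _; exact Finset.mem_range.2 (ZMod.val_lt x)
  · intro k hk; exact ZMod.val_cast_of_lt (Finset.mem_range.1 hk)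
  · intro x _; exact ZMod.natCast_rightInverse x
  · intro k _; rw [zeta_pow]

end Algebra

end BridgeTieAux

open BridgeTieAux

/-- In ℂ[S_{d,n}], for `|i−j| = 1` one has
`ē_i ē_j s_i = ē_j s_i ē_j = s_i ē_i ē_j`. -/
theorem bridge_tie_relations (d n : ℕ) (hd : 0 < d) :
    let ζ : Fin (n + 1) → FramedSym d n := fun a =>
      SemidirectProduct.inl (Pi.mulSingle a (Multiplicative.ofAdd (1 : ZMod d)))
    let s : Fin n → MonoidAlgebra ℂ (FramedSym d n) := fun a =>
      MonoidAlgebra.of ℂ (FramedSym d n)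
        (SemidirectProduct.inr (Equiv.swap a.castSucc a.succ))
    let ebar : Fin n → MonoidAlgebra ℂ (FramedSym d n) := fun a =>
      (d : ℂ)⁻¹ • ∑ k ∈ Finset.range d,
        MonoidAlgebra.of ℂ (FramedSym d n) (ζ a.castSucc ^ k * (ζ a.succ)⁻¹ ^ k)
    ∀ i j : Fin n, (i.val + 1 = j.val ∨ j.val + 1 = i.val) →
      ebar i * ebar j * s i = ebar j * s i * ebar j ∧
      ebar j * s i * ebar j = s i * ebar i * ebar j := by
  haveI : NeZero d := ⟨hd.ne'⟩
  intro ζ s ebar i j hij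
  have hebar : ∀ a : Fin n, ebar a = e2 d n a.castSucc a.succ := fun a => by
    show (d : ℂ)⁻¹ • _ = _
    rw [e2]
    congr 1
    exact sum_range_eq _ _
  rcases hij with h | h
  · -- j = i + 1
    have hbc : j.castSucc = i.succ := Fin.ext (by simp [h])
    have hs : s i = MonoidAlgebra.of ℂ (FramedSym d n)
        (SemidirectProduct.inr (Equiv.swap i.castSucc i.succ)) := rfl
    have hca : j.succ ≠ i.castSucc := by simp [Fin.ext_iff]; omega
    have hcb : j.succ ≠ i.succ := by simp [Fin.ext_iff]; omega
    have hS1 : s i * e2 d n i.succ j.succ = e2 d n i.castSucc j.succ * s i := by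
      rw [hs, s_mul_e2, Equiv.swap_apply_right, Equiv.swap_apply_of_ne_of_ne hca hcb]
    have hS2 : s i * e2 d n i.castSucc i.succ = e2 d n i.castSucc i.succ * s i := by
      rw [hs, s_mul_e2, Equiv.swap_apply_left, Equiv.swap_apply_right, e2_symm]
    rw [hebar i, hebar j, hbc]
    constructor
    · rw [mul_assoc (e2 d n i.succ j.succ), hS1, ← mul_assoc, canon1, canon2]
    · rw [mul_assoc (e2 d n i.succ j.succ), hS1, ← mul_assoc, hS2,
        mul_assoc (e2 d n i.castSucc i.succ), hS1, ← mul_assoc, canon2, canon3]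
  · -- i = j + 1
    have hb : i.castSucc = j.succ := Fin.ext (by simp [h])
    have hs : s i = MonoidAlgebra.of ℂ (FramedSym d n)
        (SemidirectProduct.inr (Equiv.swap j.succ i.succ)) := by
      show MonoidAlgebra.of ℂ (FramedSym d n)
        (SemidirectProduct.inr (Equiv.swap i.castSucc i.succ)) = _
      rw [hb]
    have hab : j.castSucc ≠ j.succ := by simp [Fin.ext_iff]
    have hac : j.castSucc ≠ i.succ := by simp [Fin.ext_iff]; omega
    have hS1 : s i * e2 d n j.castSucc j.succ = e2 d n j.castSucc i.succ * s i := by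
      rw [hs, s_mul_e2, Equiv.swap_apply_left, Equiv.swap_apply_of_ne_of_ne hab hac]
    have hS2 : s i * e2 d n j.succ i.succ = e2 d n j.succ i.succ * s i := by
      rw [hs, s_mul_e2, Equiv.swap_apply_left, Equiv.swap_apply_right, e2_symm]
    rw [hebar i, hebar j, hb]
    constructor
    · rw [mul_assoc (e2 d n j.castSucc j.succ), hS1, ← mul_assoc, canon4, canon3]
    · rw [mul_assoc (e2 d n j.castSucc j.succ), hS1, ← mul_assoc, hS2,
        mul_assoc (e2 d n j.succ i.succ), hS1, ← mul_assoc, canon3, canon2]
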